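/- Moments of second and third derivatives of the DAR(1) quasi-log-likelihood (Lemma A.10 of the paper, higher-order part): In the DAR(1) setup, for every real d ≥ 1 and all parameter coordinates θ_i, θ_j, θ_k ∈ {φ, ω, α}, E[ sup_{θ∈Θ} |(∂²l/∂θ_i∂θ_j)(θ)|^d ] < ∞ and E[ sup_{θ∈Θ} |(∂³l/∂θ_i∂θ_j∂θ_k)(θ)|^d ] < ∞. -/

import Mathlib

open MeasureTheory ProbabilityTheory

/-- DAR(1) parameter space `Θ = {(φ, ω, α) : |φ| ≤ c₁, c₂ ≤ ω ≤ c₃, c₄ ≤ α ≤ c₅}`. -/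
def darTheta (c₁ c₂ c₃ c₄ c₅ : ℝ) : Set (ℝ × ℝ × ℝ) :=
  {θ | |θ.1| ≤ c₁ ∧ c₂ ≤ θ.2.1 ∧ θ.2.1 ≤ c₃ ∧ c₄ ≤ θ.2.2 ∧ θ.2.2 ≤ c₅}

/-- DAR(1) Gaussian quasi-log-likelihood
`l(θ) = -(1/2) log(ω + α Y²) − (X − φ Y)²/(2(ω + α Y²))` for `θ = (φ, ω, α)`. -/
noncomputable def darL (Y X : ℝ) (θ : ℝ × ℝ × ℝ) : ℝ :=
  -(1 / 2) * Real.log (θ.2.1 + θ.2.2 * Y ^ 2)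
    - (X - θ.1 * Y) ^ 2 / (2 * (θ.2.1 + θ.2.2 * Y ^ 2))

noncomputable section

def svF (Y : ℝ) (θ : ℝ × ℝ × ℝ) : ℝ := θ.2.1 + θ.2.2 * Y ^ 2
def uvF (Y X : ℝ) (θ : ℝ × ℝ × ℝ) : ℝ := X - θ.1 * Y
def dsF (Y : ℝ) (a : ℝ × ℝ × ℝ) : ℝ := a.2.1 + a.2.2 * Y ^ 2
def duF (Y : ℝ) (a : ℝ × ℝ × ℝ) : ℝ := -(a.1 * Y)

lemma hs_ex (Y : ℝ) (θ : ℝ × ℝ × ℝ) :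
    ∃ D : (ℝ × ℝ × ℝ) →L[ℝ] ℝ, HasFDerivAt (fun θ : ℝ × ℝ × ℝ => θ.2.1 + θ.2.2 * Y ^ 2) D θ ∧
      ∀ a, D a = dsF Y a := by
  refine ⟨((ContinuousLinearMap.fst ℝ ℝ ℝ).comp (ContinuousLinearMap.snd ℝ ℝ (ℝ × ℝ))) +
    Y ^ 2 • ((ContinuousLinearMap.snd ℝ ℝ ℝ).comp (ContinuousLinearMap.snd ℝ ℝ (ℝ × ℝ))), ?_, ?_⟩
  · exact (hasFDerivAt_snd.fst).add ((hasFDerivAt_snd.snd).mul_const (Y ^ 2))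
  · intro a
    simp [dsF, mul_comm]

lemma hu_ex (Y X : ℝ) (θ : ℝ × ℝ × ℝ) :
    ∃ D : (ℝ × ℝ × ℝ) →L[ℝ] ℝ, HasFDerivAt (fun θ : ℝ × ℝ × ℝ => X - θ.1 * Y) D θ ∧
      ∀ a, D a = duF Y a := by
  refine ⟨(0 : (ℝ × ℝ × ℝ) →L[ℝ] ℝ) - Y • (ContinuousLinearMap.fst ℝ ℝ (ℝ × ℝ)), ?_, ?_⟩
  · exact (hasFDerivAt_const X θ).sub (hasFDerivAt_fst.mul_const Y)
  · intro a
    simp [duF, mul_comm]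

lemma hasFD_inv {f : ℝ × ℝ × ℝ → ℝ} {f' : (ℝ × ℝ × ℝ) →L[ℝ] ℝ} {x : ℝ × ℝ × ℝ}
    (hf : HasFDerivAt f f' x) (h : f x ≠ 0) :
    HasFDerivAt (fun y => (f y)⁻¹) (-((f x ^ 2)⁻¹ • f')) x := by
  simpa [Function.comp_def] using (hasDerivAt_inv h).comp_hasFDerivAt x hf
noncomputable def G1 (Y X : ℝ) (a θ : ℝ × ℝ × ℝ) : ℝ :=
  -(1 / 2) * dsF Y a * (svF Y θ)⁻¹ - duF Y a * uvF Y X θ * (svF Y θ)⁻¹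
    + 1 / 2 * dsF Y a * (uvF Y X θ * uvF Y X θ) * (svF Y θ * svF Y θ)⁻¹

noncomputable def G2 (Y X : ℝ) (a b θ : ℝ × ℝ × ℝ) : ℝ :=
  1 / 2 * (dsF Y a * dsF Y b) * (svF Y θ * svF Y θ)⁻¹
    - duF Y a * duF Y b * (svF Y θ)⁻¹
    + duF Y a * uvF Y X θ * dsF Y b * (svF Y θ * svF Y θ)⁻¹
    + dsF Y a * uvF Y X θ * duF Y b * (svF Y θ * svF Y θ)⁻¹
    - dsF Y a * (uvF Y X θ * uvF Y X θ) * dsF Y b * (svF Y θ * svF Y θ * svF Y θ)⁻¹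

noncomputable def G3 (Y X : ℝ) (a b c θ : ℝ × ℝ × ℝ) : ℝ :=
  -(dsF Y a * dsF Y b * dsF Y c) * (svF Y θ * svF Y θ * svF Y θ)⁻¹
    + duF Y a * duF Y b * dsF Y c * (svF Y θ * svF Y θ)⁻¹
    + duF Y a * dsF Y b * duF Y c * (svF Y θ * svF Y θ)⁻¹
    - 2 * (duF Y a * uvF Y X θ * dsF Y b * dsF Y c) * (svF Y θ * svF Y θ * svF Y θ)⁻¹
    + dsF Y a * duF Y b * duF Y c * (svF Y θ * svF Y θ)⁻¹
    - 2 * (dsF Y a * duF Y b * uvF Y X θ * dsF Y c) * (svF Y θ * svF Y θ * svF Y θ)⁻¹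
    - 2 * (dsF Y a * dsF Y b * uvF Y X θ * duF Y c) * (svF Y θ * svF Y θ * svF Y θ)⁻¹
    + 3 * (dsF Y a * dsF Y b * (uvF Y X θ * uvF Y X θ) * dsF Y c)
        * (svF Y θ * svF Y θ * svF Y θ * svF Y θ)⁻¹

lemma hasG1 (Y X : ℝ) (θ : ℝ × ℝ × ℝ) (h : svF Y θ ≠ 0) :
    ∃ D : (ℝ × ℝ × ℝ) →L[ℝ] ℝ, HasFDerivAt (darL Y X) D θ ∧ ∀ a, D a = G1 Y X a θ := by
  obtain ⟨Ds, hDs, hDsv⟩ := hs_ex Y θ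
  obtain ⟨Du, hDu, hDuv⟩ := hu_ex Y X θ
  have h2 : (2 : ℝ) * (θ.2.1 + θ.2.2 * Y ^ 2) ≠ 0 := by
    simpa [svF] using h
  have hsq : HasFDerivAt (fun θ' : ℝ × ℝ × ℝ => (X - θ'.1 * Y) ^ 2)
      ((X - θ.1 * Y) • Du + (X - θ.1 * Y) • Du) θ := by
    simpa [pow_two, Pi.mul_def] using hDu.mul hDu
  have hD : HasFDerivAt (darL Y X)
      ((-(1/2) : ℝ) • (((θ.2.1 + θ.2.2 * Y ^ 2))⁻¹ • Ds) -
        (((X - θ.1 * Y) ^ 2) • (-(((2 * (θ.2.1 + θ.2.2 * Y ^ 2)) ^ 2)⁻¹ • ((2:ℝ) • Ds)))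
          + (2 * (θ.2.1 + θ.2.2 * Y ^ 2))⁻¹ • ((X - θ.1 * Y) • Du + (X - θ.1 * Y) • Du))) θ := by
    unfold darL
    simp only [div_eq_mul_inv]
    exact ((hDs.log (by simpa [svF] using h)).const_mul (-(1/2))).sub
      (hsq.mul (hasFD_inv (hDs.const_mul 2) h2))
  refine ⟨_, hD, ?_⟩
  intro a
  simp only [ContinuousLinearMap.sub_apply, ContinuousLinearMap.add_apply,
    ContinuousLinearMap.smul_apply, ContinuousLinearMap.neg_apply, smul_eq_mul, hDsv, hDuv]
  have hs' : svF Y θ = θ.2.1 + θ.2.2 * Y ^ 2 := rfl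
  have hu' : uvF Y X θ = X - θ.1 * Y := rfl
  simp only [G1, ← hs', ← hu']
  field_simp
  ring
lemma hasG2 (Y X : ℝ) (a θ : ℝ × ℝ × ℝ) (h : svF Y θ ≠ 0) :
    ∃ D : (ℝ × ℝ × ℝ) →L[ℝ] ℝ, HasFDerivAt (G1 Y X a) D θ ∧ ∀ b, D b = G2 Y X a b θ := by
  obtain ⟨Ds, hDs, hDsv⟩ := hs_ex Y θ
  obtain ⟨Du, hDu, hDuv⟩ := hu_ex Y X θ
  have h' : (θ.2.1 + θ.2.2 * Y ^ 2) ≠ 0 := by simpa [svF] using h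
  have hh : (θ.2.1 + θ.2.2 * Y ^ 2) * (θ.2.1 + θ.2.2 * Y ^ 2) ≠ 0 := mul_ne_zero h' h'
  have hD := (((hasFD_inv hDs h').const_mul (-(1/2) * dsF Y a)).sub
        ((hDu.const_mul (duF Y a)).mul (hasFD_inv hDs h'))).add
      (((hDu.mul hDu).const_mul (1/2 * dsF Y a)).mul (hasFD_inv (hDs.mul hDs) hh))
  refine ⟨_, hD, ?_⟩
  intro b
  simp only [ContinuousLinearMap.sub_apply, ContinuousLinearMap.add_apply,
    ContinuousLinearMap.smul_apply, ContinuousLinearMap.neg_apply, smul_eq_mul, hDsv, hDuv,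
    Pi.mul_apply]
  have hs' : svF Y θ = θ.2.1 + θ.2.2 * Y ^ 2 := rfl
  have hu' : uvF Y X θ = X - θ.1 * Y := rfl
  simp only [G2, ← hs', ← hu']
  field_simp
  ring

lemma hasG3 (Y X : ℝ) (a b θ : ℝ × ℝ × ℝ) (h : svF Y θ ≠ 0) :
    ∃ D : (ℝ × ℝ × ℝ) →L[ℝ] ℝ, HasFDerivAt (G2 Y X a b) D θ ∧ ∀ c, D c = G3 Y X a b c θ := by
  obtain ⟨Ds, hDs, hDsv⟩ := hs_ex Y θ
  obtain ⟨Du, hDu, hDuv⟩ := hu_ex Y X θ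
  have h' : (θ.2.1 + θ.2.2 * Y ^ 2) ≠ 0 := by simpa [svF] using h
  have hh : (θ.2.1 + θ.2.2 * Y ^ 2) * (θ.2.1 + θ.2.2 * Y ^ 2) ≠ 0 := mul_ne_zero h' h'
  have hhh : (θ.2.1 + θ.2.2 * Y ^ 2) * (θ.2.1 + θ.2.2 * Y ^ 2) * (θ.2.1 + θ.2.2 * Y ^ 2) ≠ 0 :=
    mul_ne_zero hh h'
  have hD := (((((hasFD_inv (hDs.mul hDs) hh).const_mul (1/2 * (dsF Y a * dsF Y b))).sub
        ((hasFD_inv hDs h').const_mul (duF Y a * duF Y b))).add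
        (((hDu.const_mul (duF Y a)).mul_const (dsF Y b)).mul (hasFD_inv (hDs.mul hDs) hh))).add
        (((hDu.const_mul (dsF Y a)).mul_const (duF Y b)).mul (hasFD_inv (hDs.mul hDs) hh))).sub
        ((((hDu.mul hDu).const_mul (dsF Y a)).mul_const (dsF Y b)).mul
          (hasFD_inv ((hDs.mul hDs).mul hDs) hhh))
  refine ⟨_, hD, ?_⟩
  intro c
  simp only [ContinuousLinearMap.sub_apply, ContinuousLinearMap.add_apply,
    ContinuousLinearMap.smul_apply, ContinuousLinearMap.neg_apply, smul_eq_mul, hDsv, hDuv,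
    Pi.mul_apply]
  have hs' : svF Y θ = θ.2.1 + θ.2.2 * Y ^ 2 := rfl
  have hu' : uvF Y X θ = X - θ.1 * Y := rfl
  simp only [G3, ← hs', ← hu']
  field_simp
  ring
lemma isOpen_sv (Y : ℝ) : IsOpen {θ : ℝ × ℝ × ℝ | svF Y θ ≠ 0} := by
  have hc : Continuous (svF Y) := by
    unfold svF; fun_prop
  exact isOpen_compl_singleton.preimage hc

lemma fderiv1 (Y X : ℝ) (θ : ℝ × ℝ × ℝ) (h : svF Y θ ≠ 0) (a : ℝ × ℝ × ℝ) :
    fderiv ℝ (darL Y X) θ a = G1 Y X a θ := by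
  obtain ⟨D, hD, hval⟩ := hasG1 Y X θ h
  rw [hD.fderiv]; exact hval a

lemma fderiv2 (Y X : ℝ) (θ : ℝ × ℝ × ℝ) (h : svF Y θ ≠ 0) (a b : ℝ × ℝ × ℝ) :
    fderiv ℝ (fun θ' => fderiv ℝ (darL Y X) θ' a) θ b = G2 Y X a b θ := by
  have hev : (fun θ' => fderiv ℝ (darL Y X) θ' a) =ᶠ[nhds θ] (fun θ' => G1 Y X a θ') := by
    filter_upwards [(isOpen_sv Y).mem_nhds h] with θ' h'
    exact fderiv1 Y X θ' h' a
  rw [hev.fderiv_eq]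
  obtain ⟨D, hD, hval⟩ := hasG2 Y X a θ h
  rw [hD.fderiv]; exact hval b

lemma fderiv3 (Y X : ℝ) (θ : ℝ × ℝ × ℝ) (h : svF Y θ ≠ 0) (a b c : ℝ × ℝ × ℝ) :
    fderiv ℝ (fun θ' => fderiv ℝ (fun θ'' => fderiv ℝ (darL Y X) θ'' a) θ' b) θ c
      = G3 Y X a b c θ := by
  have hev : (fun θ' => fderiv ℝ (fun θ'' => fderiv ℝ (darL Y X) θ'' a) θ' b)
      =ᶠ[nhds θ] (fun θ' => G2 Y X a b θ') := by
    filter_upwards [(isOpen_sv Y).mem_nhds h] with θ' h'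
    exact fderiv2 Y X θ' h' a b
  rw [hev.fderiv_eq]
  obtain ⟨D, hD, hval⟩ := hasG3 Y X a b θ h
  rw [hD.fderiv]; exact hval c
lemma bnd1 {x p a : ℝ} (hp : 0 < p) (hx : |x| ≤ a * p) : |x * p⁻¹| ≤ a := by
  have ha : 0 ≤ a * p := le_trans (abs_nonneg x) hx
  have ha' : 0 ≤ a := by by_contra hcon; push_neg at hcon; nlinarith
  calc |x * p⁻¹| = |x| * p⁻¹ := by
        rw [abs_mul, abs_inv, abs_of_pos hp]
    _ ≤ (a * p) * p⁻¹ := by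
        apply mul_le_mul_of_nonneg_right hx (by positivity)
    _ = a := by field_simp

lemma bnd2 {x y p a b : ℝ} (hp : 0 < p) (hx : |x| ≤ a * p) (hy : |y| ≤ b * p) :
    |x * y * (p * p)⁻¹| ≤ a * b := by
  have ha : 0 ≤ a := by by_contra hcon; push_neg at hcon; nlinarith [le_trans (abs_nonneg x) hx]
  have hb : 0 ≤ b := by by_contra hcon; push_neg at hcon; nlinarith [le_trans (abs_nonneg y) hy]
  calc |x * y * (p * p)⁻¹| = |x| * |y| * (p * p)⁻¹ := by
        rw [abs_mul, abs_mul, abs_inv, abs_of_pos (by positivity : (0:ℝ) < p * p)]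
    _ ≤ (a * p) * (b * p) * (p * p)⁻¹ := by
        apply mul_le_mul_of_nonneg_right _ (by positivity)
        exact mul_le_mul hx hy (abs_nonneg y) (by positivity)
    _ = a * b := by field_simp

lemma bnd3 {x y z p a b c : ℝ} (hp : 0 < p) (hx : |x| ≤ a * p) (hy : |y| ≤ b * p)
    (hz : |z| ≤ c * p) : |x * y * z * (p * p * p)⁻¹| ≤ a * b * c := by
  have ha : 0 ≤ a := by by_contra hcon; push_neg at hcon; nlinarith [le_trans (abs_nonneg x) hx]
  have hb : 0 ≤ b := by by_contra hcon; push_neg at hcon; nlinarith [le_trans (abs_nonneg y) hy]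
  have hc : 0 ≤ c := by by_contra hcon; push_neg at hcon; nlinarith [le_trans (abs_nonneg z) hz]
  calc |x * y * z * (p * p * p)⁻¹| = |x| * |y| * |z| * (p * p * p)⁻¹ := by
        rw [abs_mul, abs_mul, abs_mul, abs_inv,
          abs_of_pos (by positivity : (0:ℝ) < p * p * p)]
    _ ≤ (a * p) * (b * p) * (c * p) * (p * p * p)⁻¹ := by
        apply mul_le_mul_of_nonneg_right _ (by positivity)
        exact mul_le_mul (mul_le_mul hx hy (abs_nonneg y) (by positivity)) hz
          (abs_nonneg z) (by positivity)
    _ = a * b * c := by field_simp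

lemma bnd4 {x y z w p a b c d : ℝ} (hp : 0 < p) (hx : |x| ≤ a * p) (hy : |y| ≤ b * p)
    (hz : |z| ≤ c * p) (hw : |w| ≤ d * p) :
    |x * y * z * w * (p * p * p * p)⁻¹| ≤ a * b * c * d := by
  have ha : 0 ≤ a := by by_contra hcon; push_neg at hcon; nlinarith [le_trans (abs_nonneg x) hx]
  have hb : 0 ≤ b := by by_contra hcon; push_neg at hcon; nlinarith [le_trans (abs_nonneg y) hy]
  have hc : 0 ≤ c := by by_contra hcon; push_neg at hcon; nlinarith [le_trans (abs_nonneg z) hz]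
  have hd : 0 ≤ d := by by_contra hcon; push_neg at hcon; nlinarith [le_trans (abs_nonneg w) hw]
  calc |x * y * z * w * (p * p * p * p)⁻¹| = |x| * |y| * |z| * |w| * (p * p * p * p)⁻¹ := by
        rw [abs_mul, abs_mul, abs_mul, abs_mul, abs_inv,
          abs_of_pos (by positivity : (0:ℝ) < p * p * p * p)]
    _ ≤ (a * p) * (b * p) * (c * p) * (d * p) * (p * p * p * p)⁻¹ := by
        apply mul_le_mul_of_nonneg_right _ (by positivity)
        exact mul_le_mul (mul_le_mul (mul_le_mul hx hy (abs_nonneg y) (by positivity)) hz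
          (abs_nonneg z) (by positivity)) hw (abs_nonneg w) (by positivity)
    _ = a * b * c * d := by field_simp
noncomputable def KK (c₂ c₄ : ℝ) : ℝ := 1/c₂ + 1/c₄
noncomputable def CV (c₁ c₂ c₃ c₄ c₅ : ℝ) : ℝ := 8*c₁^2/c₄ + 2*(c₃/c₂ + c₅/c₄)
noncomputable def DM (c₁ c₂ c₃ c₄ c₅ : ℝ) : ℝ := (1/c₄ + CV c₁ c₂ c₃ c₄ c₅)/2
noncomputable def CC2 (c₁ c₂ c₃ c₄ c₅ : ℝ) : ℝ :=
  (KK c₂ c₄)^2/2 + 1/c₄ + 2*(DM c₁ c₂ c₃ c₄ c₅)*(KK c₂ c₄) + (KK c₂ c₄)^2*(CV c₁ c₂ c₃ c₄ c₅)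
noncomputable def CC3 (c₁ c₂ c₃ c₄ c₅ : ℝ) : ℝ :=
  (KK c₂ c₄)^3 + 3*((KK c₂ c₄)*(1/c₄)) + 6*((KK c₂ c₄)^2*(DM c₁ c₂ c₃ c₄ c₅))
    + 3*((KK c₂ c₄)^3*(CV c₁ c₂ c₃ c₄ c₅))

section bounds

variable {c₁ c₂ c₃ c₄ c₅ φ₀ ω₀ α₀ : ℝ}

lemma KK_pos (hc₂ : 0 < c₂) (hc₄ : 0 < c₄) : 0 < KK c₂ c₄ :=
  add_pos (one_div_pos.2 hc₂) (one_div_pos.2 hc₄)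

lemma CV_pos (hc₁ : 0 < c₁) (hc₂ : 0 < c₂) (hc₃ : 0 < c₃) (hc₄ : 0 < c₄) (hc₅ : 0 < c₅) :
    0 < CV c₁ c₂ c₃ c₄ c₅ :=
  add_pos (div_pos (by nlinarith) hc₄)
    (mul_pos two_pos (add_pos (div_pos hc₃ hc₂) (div_pos hc₅ hc₄)))

lemma DM_pos (hc₁ : 0 < c₁) (hc₂ : 0 < c₂) (hc₃ : 0 < c₃) (hc₄ : 0 < c₄) (hc₅ : 0 < c₅) :
    0 < DM c₁ c₂ c₃ c₄ c₅ :=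
  div_pos (add_pos (one_div_pos.2 hc₄) (CV_pos hc₁ hc₂ hc₃ hc₄ hc₅)) two_pos

lemma CC2_pos (hc₁ : 0 < c₁) (hc₂ : 0 < c₂) (hc₃ : 0 < c₃) (hc₄ : 0 < c₄) (hc₅ : 0 < c₅) :
    0 < CC2 c₁ c₂ c₃ c₄ c₅ := by
  have hK := KK_pos hc₂ hc₄
  have hCV := CV_pos hc₁ hc₂ hc₃ hc₄ hc₅
  have hDM := DM_pos hc₁ hc₂ hc₃ hc₄ hc₅
  have h4 := one_div_pos.2 hc₄
  unfold CC2
  nlinarith [mul_pos hK hK, mul_pos hDM hK, mul_pos (mul_pos hK hK) hCV]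

lemma CC3_pos (hc₁ : 0 < c₁) (hc₂ : 0 < c₂) (hc₃ : 0 < c₃) (hc₄ : 0 < c₄) (hc₅ : 0 < c₅) :
    0 < CC3 c₁ c₂ c₃ c₄ c₅ := by
  have hK := KK_pos hc₂ hc₄
  have hCV := CV_pos hc₁ hc₂ hc₃ hc₄ hc₅
  have hDM := DM_pos hc₁ hc₂ hc₃ hc₄ hc₅
  have h4 := one_div_pos.2 hc₄
  unfold CC3
  nlinarith [mul_pos (mul_pos hK hK) hK, mul_pos hK h4, mul_pos (mul_pos hK hK) hDM,
    mul_pos (mul_pos (mul_pos hK hK) hK) hCV]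

set_option maxHeartbeats 1000000 in
lemma ingredients (hc₁ : 0 < c₁) (hc₂ : 0 < c₂) (hc₃ : 0 < c₃) (hc₄ : 0 < c₄) (hc₅ : 0 < c₅)
    (hφ₀ : |φ₀| ≤ c₁) (hω₀ : c₂ ≤ ω₀) (hω₀' : ω₀ ≤ c₃) (hα₀ : c₄ ≤ α₀) (hα₀' : α₀ ≤ c₅)
    (Yr er : ℝ) (θ : ℝ × ℝ × ℝ) (hθ : θ ∈ darTheta c₁ c₂ c₃ c₄ c₅) :
    0 < svF Yr θ ∧
    (∀ a ∈ ({(1, 0, 0), (0, 1, 0), (0, 0, 1)} : Set (ℝ × ℝ × ℝ)),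
      |dsF Yr a| ≤ KK c₂ c₄ * svF Yr θ) ∧
    (∀ a ∈ ({(1, 0, 0), (0, 1, 0), (0, 0, 1)} : Set (ℝ × ℝ × ℝ)),
      ∀ b ∈ ({(1, 0, 0), (0, 1, 0), (0, 0, 1)} : Set (ℝ × ℝ × ℝ)),
      |duF Yr a * duF Yr b| ≤ (1/c₄) * svF Yr θ) ∧
    (∀ a ∈ ({(1, 0, 0), (0, 1, 0), (0, 0, 1)} : Set (ℝ × ℝ × ℝ)),
      |duF Yr a * uvF Yr (φ₀ * Yr + er * Real.sqrt (ω₀ + α₀ * Yr ^ 2)) θ|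
        ≤ (DM c₁ c₂ c₃ c₄ c₅ * (1 + er^2)) * svF Yr θ) ∧
    |uvF Yr (φ₀ * Yr + er * Real.sqrt (ω₀ + α₀ * Yr ^ 2)) θ *
        uvF Yr (φ₀ * Yr + er * Real.sqrt (ω₀ + α₀ * Yr ^ 2)) θ|
      ≤ (CV c₁ c₂ c₃ c₄ c₅ * (1 + er^2)) * svF Yr θ := by
  obtain ⟨h1, h2, h3, h4, h5⟩ := hθ
  have hp0 : 0 < svF Yr θ := by
    unfold svF; nlinarith [sq_nonneg Yr]
  have hY2 : Yr^2 ≤ (1/c₄) * svF Yr θ := by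
    rw [show (1/c₄) * svF Yr θ = svF Yr θ / c₄ from by ring, le_div_iff₀ hc₄]
    unfold svF; nlinarith [sq_nonneg Yr]
  have h1p : 1 ≤ (1/c₂) * svF Yr θ := by
    rw [show (1/c₂) * svF Yr θ = svF Yr θ / c₂ from by ring, le_div_iff₀ hc₂]
    unfold svF at hp0 ⊢; nlinarith [sq_nonneg Yr]
  have hq2 : 0 ≤ (1/c₂) * svF Yr θ := by positivity
  have hq4 : 0 ≤ (1/c₄) * svF Yr θ := by positivity
  set v := uvF Yr (φ₀ * Yr + er * Real.sqrt (ω₀ + α₀ * Yr ^ 2)) θ with hvdef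
  have hRnn : 0 ≤ ω₀ + α₀ * Yr ^ 2 := by nlinarith [sq_nonneg Yr]
  have hR : Real.sqrt (ω₀ + α₀ * Yr ^ 2) ^ 2 = ω₀ + α₀ * Yr ^ 2 := Real.sq_sqrt hRnn
  have hφ' : (φ₀ - θ.1)^2 ≤ 4*c₁^2 := by
    have h1' := abs_le.1 h1
    have h1'' := abs_le.1 hφ₀
    nlinarith
  have hv1 : v^2 ≤ 8*c₁^2*Yr^2 + 2*er^2*(ω₀ + α₀*Yr^2) := by
    have hvv : v = (φ₀ - θ.1)*Yr + er * Real.sqrt (ω₀ + α₀ * Yr ^ 2) := by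
      rw [hvdef]; unfold uvF; ring
    rw [hvv]
    nlinarith [sq_nonneg ((φ₀ - θ.1)*Yr - er * Real.sqrt (ω₀ + α₀ * Yr ^ 2)),
      mul_le_mul_of_nonneg_right hφ' (sq_nonneg Yr), sq_nonneg er, hRnn, hR,
      mul_nonneg (sq_nonneg er) hRnn]
  have hp3 : c₃ ≤ (c₃/c₂) * svF Yr θ := by
    rw [div_mul_eq_mul_div, le_div_iff₀ hc₂]
    unfold svF
    nlinarith [mul_le_mul_of_nonneg_left h2 hc₃.le,
      mul_nonneg hc₃.le (mul_nonneg (le_trans hc₄.le h4) (sq_nonneg Yr))]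
  have hp5 : c₅ * Yr^2 ≤ (c₅/c₄) * svF Yr θ := by
    rw [div_mul_eq_mul_div, le_div_iff₀ hc₄]
    unfold svF
    have t0 : c₄*Yr^2 ≤ θ.2.1 + θ.2.2*Yr^2 := by
      nlinarith [mul_le_mul_of_nonneg_right h4 (sq_nonneg Yr)]
    nlinarith [mul_le_mul_of_nonneg_left t0 hc₅.le]
  have hvbound : v^2 ≤ (CV c₁ c₂ c₃ c₄ c₅ * (1 + er^2)) * svF Yr θ := by
    have hA1 : 8*c₁^2*Yr^2 ≤ 8*c₁^2*((1/c₄) * svF Yr θ) :=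
      mul_le_mul_of_nonneg_left hY2 (by positivity)
    have hA2 : 2*er^2*(ω₀ + α₀*Yr^2) ≤ 2*er^2*((c₃/c₂) * svF Yr θ + (c₅/c₄) * svF Yr θ) := by
      apply mul_le_mul_of_nonneg_left _ (by positivity)
      nlinarith [sq_nonneg Yr]
    unfold CV
    have expand : (8*c₁^2/c₄ + 2*(c₃/c₂ + c₅/c₄)) * (1+er^2) * svF Yr θ
        = 8*c₁^2*((1/c₄) * svF Yr θ)
          + 2*er^2*((c₃/c₂) * svF Yr θ + (c₅/c₄) * svF Yr θ)
          + ((8*c₁^2/c₄)*(er^2*svF Yr θ) + 2*((c₃/c₂)*svF Yr θ)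
            + 2*((c₅/c₄)*svF Yr θ)) := by ring
    rw [expand]
    have n1 : 0 ≤ (8*c₁^2/c₄)*(er^2*svF Yr θ) := by positivity
    have n2 : 0 ≤ (c₃/c₂)*svF Yr θ := by positivity
    have n3 : 0 ≤ (c₅/c₄)*svF Yr θ := by positivity
    linarith
  have hKp : 0 ≤ KK c₂ c₄ * svF Yr θ := by
    have := KK_pos hc₂ hc₄; positivity
  have hDME : 0 ≤ (DM c₁ c₂ c₃ c₄ c₅ * (1 + er^2)) * svF Yr θ := by
    have := DM_pos hc₁ hc₂ hc₃ hc₄ hc₅; positivity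
  refine ⟨hp0, ?_, ?_, ?_, ?_⟩
  · intro a ha
    simp only [Set.mem_insert_iff, Set.mem_singleton_iff] at ha
    rcases ha with rfl | rfl | rfl
    · rw [show dsF Yr ((1:ℝ), (0:ℝ), (0:ℝ)) = 0 from by norm_num [dsF], abs_zero]
      exact hKp
    · rw [show dsF Yr ((0:ℝ), (1:ℝ), (0:ℝ)) = 1 from by norm_num [dsF], abs_one]
      unfold KK; nlinarith
    · rw [show dsF Yr ((0:ℝ), (0:ℝ), (1:ℝ)) = Yr^2 from by norm_num [dsF],
        abs_of_nonneg (sq_nonneg Yr)]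
      unfold KK; nlinarith
  · intro a ha b hb
    simp only [Set.mem_insert_iff, Set.mem_singleton_iff] at ha hb
    have hz1 : duF Yr ((0:ℝ), (1:ℝ), (0:ℝ)) = 0 := by norm_num [duF]
    have hz2 : duF Yr ((0:ℝ), (0:ℝ), (1:ℝ)) = 0 := by norm_num [duF]
    have hy : duF Yr ((1:ℝ), (0:ℝ), (0:ℝ)) = -Yr := by norm_num [duF]
    rcases ha with rfl | rfl | rfl <;> rcases hb with rfl | rfl | rfl <;>
      simp only [hz1, hz2, hy, zero_mul, mul_zero, abs_zero] <;>
      try exact hq4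
    rw [show (-Yr) * (-Yr) = Yr^2 from by ring, abs_of_nonneg (sq_nonneg Yr)]
    exact hY2
  · intro a ha
    simp only [Set.mem_insert_iff, Set.mem_singleton_iff] at ha
    have hz1 : duF Yr ((0:ℝ), (1:ℝ), (0:ℝ)) = 0 := by norm_num [duF]
    have hz2 : duF Yr ((0:ℝ), (0:ℝ), (1:ℝ)) = 0 := by norm_num [duF]
    have hy : duF Yr ((1:ℝ), (0:ℝ), (0:ℝ)) = -Yr := by norm_num [duF]
    rcases ha with rfl | rfl | rfl <;>
      simp only [hz1, hz2, hy, zero_mul, abs_zero] <;>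
      try exact hDME
    rw [abs_mul, abs_neg]
    have hmv : |Yr| * |v| ≤ (Yr^2 + v^2)/2 := by
      nlinarith [sq_nonneg (|Yr| - |v|), sq_abs Yr, sq_abs v]
    have hfin : (Yr^2 + v^2)/2 ≤ (DM c₁ c₂ c₃ c₄ c₅ * (1 + er^2)) * svF Yr θ := by
      unfold DM
      nlinarith [hY2, hvbound,
        mul_nonneg (mul_nonneg (one_div_pos.2 hc₄).le (sq_nonneg er)) hp0.le]
    linarith
  · rw [show v * v = v^2 from by ring, abs_of_nonneg (sq_nonneg v)]
    exact hvbound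

end bounds
lemma boundG2 (hc₁ : 0 < c₁) (hc₂ : 0 < c₂) (hc₃ : 0 < c₃) (hc₄ : 0 < c₄) (hc₅ : 0 < c₅)
    (hφ₀ : |φ₀| ≤ c₁) (hω₀ : c₂ ≤ ω₀) (hω₀' : ω₀ ≤ c₃) (hα₀ : c₄ ≤ α₀) (hα₀' : α₀ ≤ c₅)
    (Yr er : ℝ) {a b : ℝ × ℝ × ℝ}
    (ha : a ∈ ({(1, 0, 0), (0, 1, 0), (0, 0, 1)} : Set (ℝ × ℝ × ℝ)))
    (hb : b ∈ ({(1, 0, 0), (0, 1, 0), (0, 0, 1)} : Set (ℝ × ℝ × ℝ)))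
    {θ : ℝ × ℝ × ℝ} (hθ : θ ∈ darTheta c₁ c₂ c₃ c₄ c₅) :
    |G2 Yr (φ₀ * Yr + er * Real.sqrt (ω₀ + α₀ * Yr ^ 2)) a b θ|
      ≤ CC2 c₁ c₂ c₃ c₄ c₅ * (1 + er ^ 2) := by
  obtain ⟨hp0, hds, hdudu, hduv, hvv⟩ :=
    ingredients hc₁ hc₂ hc₃ hc₄ hc₅ hφ₀ hω₀ hω₀' hα₀ hα₀' Yr er θ hθ
  unfold G2
  set X := φ₀ * Yr + er * Real.sqrt (ω₀ + α₀ * Yr ^ 2) with hX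
  set p := svF Yr θ with hp
  set v := uvF Yr X θ with hv
  set K := KK c₂ c₄ with hK
  set Dm := DM c₁ c₂ c₃ c₄ c₅ with hDm
  set Cv := CV c₁ c₂ c₃ c₄ c₅ with hCv
  have hKpos := KK_pos hc₂ hc₄
  have hDmpos := DM_pos hc₁ hc₂ hc₃ hc₄ hc₅
  have hCvpos := CV_pos hc₁ hc₂ hc₃ hc₄ hc₅
  have hE : (1:ℝ) ≤ 1 + er^2 := by nlinarith [sq_nonneg er]
  have hT1 : |1/2 * (dsF Yr a * dsF Yr b) * (p * p)⁻¹| ≤ 1/2 * (K * K) := by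
    rw [show 1/2 * (dsF Yr a * dsF Yr b) * (p * p)⁻¹
        = 1/2 * (dsF Yr a * dsF Yr b * (p * p)⁻¹) from by ring, abs_mul]
    rw [show |(1:ℝ)/2| = 1/2 from by norm_num]
    exact mul_le_mul_of_nonneg_left (bnd2 hp0 (hds a ha) (hds b hb)) (by norm_num)
  have hT2 : |duF Yr a * duF Yr b * p⁻¹| ≤ 1/c₄ :=
    bnd1 hp0 (hdudu a ha b hb)
  have hT3 : |duF Yr a * v * dsF Yr b * (p * p)⁻¹| ≤ (Dm * (1 + er^2)) * K :=
    bnd2 hp0 (hduv a ha) (hds b hb)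
  have hT4 : |dsF Yr a * v * duF Yr b * (p * p)⁻¹| ≤ (Dm * (1 + er^2)) * K := by
    rw [show dsF Yr a * v * duF Yr b * (p * p)⁻¹
        = duF Yr b * v * dsF Yr a * (p * p)⁻¹ from by ring]
    exact bnd2 hp0 (hduv b hb) (hds a ha)
  have hT5 : |dsF Yr a * (v * v) * dsF Yr b * (p * p * p)⁻¹| ≤ K * (Cv * (1 + er^2)) * K :=
    bnd3 hp0 (hds a ha) hvv (hds b hb)
  have l1 := abs_le.1 hT1
  have l2 := abs_le.1 hT2
  have l3 := abs_le.1 hT3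
  have l4 := abs_le.1 hT4
  have l5 := abs_le.1 hT5
  rw [abs_le]
  have hCC2 : CC2 c₁ c₂ c₃ c₄ c₅ = K^2/2 + 1/c₄ + 2*Dm*K + K^2*Cv := by
    rw [hK, hDm, hCv]; rfl
  have expand : (K^2/2 + 1/c₄ + 2*Dm*K + K^2*Cv) * (1 + er^2)
      = 1/2*(K*K) + 1/c₄ + ((Dm*(1+er^2))*K + (Dm*(1+er^2))*K)
        + K*(Cv*(1+er^2))*K + (K*K/2*er^2 + 1/c₄*er^2) := by ring
  have n1 : 0 ≤ K*K/2*er^2 := by positivity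
  have n2 : 0 ≤ 1/c₄*er^2 := by positivity
  rw [hCC2, expand]
  constructor
  · linarith [l1.1, l2.2, l3.1, l4.1, l5.2]
  · linarith [l1.2, l2.1, l3.2, l4.2, l5.1]
lemma boundG3 (hc₁ : 0 < c₁) (hc₂ : 0 < c₂) (hc₃ : 0 < c₃) (hc₄ : 0 < c₄) (hc₅ : 0 < c₅)
    (hφ₀ : |φ₀| ≤ c₁) (hω₀ : c₂ ≤ ω₀) (hω₀' : ω₀ ≤ c₃) (hα₀ : c₄ ≤ α₀) (hα₀' : α₀ ≤ c₅)
    (Yr er : ℝ) {a b c : ℝ × ℝ × ℝ}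
    (ha : a ∈ ({(1, 0, 0), (0, 1, 0), (0, 0, 1)} : Set (ℝ × ℝ × ℝ)))
    (hb : b ∈ ({(1, 0, 0), (0, 1, 0), (0, 0, 1)} : Set (ℝ × ℝ × ℝ)))
    (hc : c ∈ ({(1, 0, 0), (0, 1, 0), (0, 0, 1)} : Set (ℝ × ℝ × ℝ)))
    {θ : ℝ × ℝ × ℝ} (hθ : θ ∈ darTheta c₁ c₂ c₃ c₄ c₅) :
    |G3 Yr (φ₀ * Yr + er * Real.sqrt (ω₀ + α₀ * Yr ^ 2)) a b c θ|
      ≤ CC3 c₁ c₂ c₃ c₄ c₅ * (1 + er ^ 2) := by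
  obtain ⟨hp0, hds, hdudu, hduv, hvv⟩ :=
    ingredients hc₁ hc₂ hc₃ hc₄ hc₅ hφ₀ hω₀ hω₀' hα₀ hα₀' Yr er θ hθ
  unfold G3
  set X := φ₀ * Yr + er * Real.sqrt (ω₀ + α₀ * Yr ^ 2) with hX
  set p := svF Yr θ with hp
  set v := uvF Yr X θ with hv
  set K := KK c₂ c₄ with hK
  set Dm := DM c₁ c₂ c₃ c₄ c₅ with hDm
  set Cv := CV c₁ c₂ c₃ c₄ c₅ with hCv
  have hT1 : |(-(dsF Yr a * dsF Yr b * dsF Yr c)) * (p * p * p)⁻¹| ≤ K * K * K := by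
    rw [show (-(dsF Yr a * dsF Yr b * dsF Yr c)) * (p * p * p)⁻¹
        = -(dsF Yr a * dsF Yr b * dsF Yr c * (p * p * p)⁻¹) from by ring, abs_neg]
    exact bnd3 hp0 (hds a ha) (hds b hb) (hds c hc)
  have hT2 : |duF Yr a * duF Yr b * dsF Yr c * (p * p)⁻¹| ≤ 1/c₄ * K :=
    bnd2 hp0 (hdudu a ha b hb) (hds c hc)
  have hT3 : |duF Yr a * dsF Yr b * duF Yr c * (p * p)⁻¹| ≤ 1/c₄ * K := by
    rw [show duF Yr a * dsF Yr b * duF Yr c * (p * p)⁻¹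
        = duF Yr a * duF Yr c * dsF Yr b * (p * p)⁻¹ from by ring]
    exact bnd2 hp0 (hdudu a ha c hc) (hds b hb)
  have hT4 : |2 * (duF Yr a * v * dsF Yr b * dsF Yr c) * (p * p * p)⁻¹|
      ≤ 2 * ((Dm * (1 + er^2)) * K * K) := by
    rw [show 2 * (duF Yr a * v * dsF Yr b * dsF Yr c) * (p * p * p)⁻¹
        = 2 * (duF Yr a * v * dsF Yr b * dsF Yr c * (p * p * p)⁻¹) from by ring, abs_mul,
      show |(2:ℝ)| = 2 from by norm_num]
    exact mul_le_mul_of_nonneg_left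
      (bnd3 hp0 (hduv a ha) (hds b hb) (hds c hc)) (by norm_num)
  have hT5 : |dsF Yr a * duF Yr b * duF Yr c * (p * p)⁻¹| ≤ 1/c₄ * K := by
    rw [show dsF Yr a * duF Yr b * duF Yr c * (p * p)⁻¹
        = duF Yr b * duF Yr c * dsF Yr a * (p * p)⁻¹ from by ring]
    exact bnd2 hp0 (hdudu b hb c hc) (hds a ha)
  have hT6 : |2 * (dsF Yr a * duF Yr b * v * dsF Yr c) * (p * p * p)⁻¹|
      ≤ 2 * ((Dm * (1 + er^2)) * K * K) := by
    rw [show 2 * (dsF Yr a * duF Yr b * v * dsF Yr c) * (p * p * p)⁻¹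
        = 2 * (duF Yr b * v * dsF Yr a * dsF Yr c * (p * p * p)⁻¹) from by ring, abs_mul,
      show |(2:ℝ)| = 2 from by norm_num]
    exact mul_le_mul_of_nonneg_left
      (bnd3 hp0 (hduv b hb) (hds a ha) (hds c hc)) (by norm_num)
  have hT7 : |2 * (dsF Yr a * dsF Yr b * v * duF Yr c) * (p * p * p)⁻¹|
      ≤ 2 * ((Dm * (1 + er^2)) * K * K) := by
    rw [show 2 * (dsF Yr a * dsF Yr b * v * duF Yr c) * (p * p * p)⁻¹
        = 2 * (duF Yr c * v * dsF Yr a * dsF Yr b * (p * p * p)⁻¹) from by ring, abs_mul,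
      show |(2:ℝ)| = 2 from by norm_num]
    exact mul_le_mul_of_nonneg_left
      (bnd3 hp0 (hduv c hc) (hds a ha) (hds b hb)) (by norm_num)
  have hT8 : |3 * (dsF Yr a * dsF Yr b * (v * v) * dsF Yr c) * (p * p * p * p)⁻¹|
      ≤ 3 * (K * K * (Cv * (1 + er^2)) * K) := by
    rw [show 3 * (dsF Yr a * dsF Yr b * (v * v) * dsF Yr c) * (p * p * p * p)⁻¹
        = 3 * (dsF Yr a * dsF Yr b * (v * v) * dsF Yr c * (p * p * p * p)⁻¹) from by ring,
      abs_mul, show |(3:ℝ)| = 3 from by norm_num]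
    exact mul_le_mul_of_nonneg_left
      (bnd4 hp0 (hds a ha) (hds b hb) hvv (hds c hc)) (by norm_num)
  have l1 := abs_le.1 hT1
  have l2 := abs_le.1 hT2
  have l3 := abs_le.1 hT3
  have l4 := abs_le.1 hT4
  have l5 := abs_le.1 hT5
  have l6 := abs_le.1 hT6
  have l7 := abs_le.1 hT7
  have l8 := abs_le.1 hT8
  rw [abs_le]
  have hCC3 : CC3 c₁ c₂ c₃ c₄ c₅
      = K^3 + 3*(K*(1/c₄)) + 6*(K^2*Dm) + 3*(K^3*Cv) := by
    rw [hK, hDm, hCv]; rfl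
  have expand : (K^3 + 3*(K*(1/c₄)) + 6*(K^2*Dm) + 3*(K^3*Cv)) * (1 + er^2)
      = K*K*K + (1/c₄*K + 1/c₄*K + 1/c₄*K)
        + (2*((Dm*(1+er^2))*K*K) + 2*((Dm*(1+er^2))*K*K) + 2*((Dm*(1+er^2))*K*K))
        + 3*(K*K*(Cv*(1+er^2))*K)
        + (K*K*K*er^2 + 3*(K*(1/c₄))*er^2) := by ring
  have hKpos := KK_pos hc₂ hc₄
  have n1 : 0 ≤ K*K*K*er^2 := by positivity
  have n2 : 0 ≤ 3*(K*(1/c₄))*er^2 := by positivity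
  rw [hCC3, expand]
  constructor
  · linarith [l1.1, l2.1, l3.1, l4.2, l5.1, l6.2, l7.2, l8.1]
  · linarith [l1.2, l2.2, l3.2, l4.1, l5.2, l6.1, l7.1, l8.2]
lemma gaussInt (C d : ℝ) (hC : 0 < C) (hd0 : 0 ≤ d) :
    ∫⁻ x, ENNReal.ofReal ((C * (1 + x ^ 2)) ^ d) ∂(gaussianReal 0 1) < ⊤ := by
  have hcont : Continuous fun x : ℝ => (C * (1 + x ^ 2)) ^ d := by
    apply Continuous.rpow_const (by fun_prop)
    intro x
    exact Or.inr hd0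
  have hInt : Integrable (fun x : ℝ => (C * (1 + x ^ 2)) ^ d) (gaussianReal 0 1) := by
    rw [gaussianReal_of_var_ne_zero _ one_ne_zero]
    rw [integrable_withDensity_iff (measurable_gaussianPDF 0 1)
      (ae_of_all _ fun x => ENNReal.ofReal_lt_top)]
    have hpdf : ∀ x : ℝ, (gaussianPDF 0 1 x).toReal = gaussianPDFReal 0 1 x := fun x =>
      ENNReal.toReal_ofReal (gaussianPDFReal_nonneg 0 1 x)
    apply Integrable.mono'
      ((integrable_exp_neg_mul_sq (by norm_num : (0:ℝ) < 1/4)).const_mul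
        (C ^ d * Real.exp (4 * d ^ 2) * (Real.sqrt (2 * Real.pi))⁻¹))
    · apply Continuous.aestronglyMeasurable
      apply hcont.mul
      have : (fun x : ℝ => (gaussianPDF 0 1 x).toReal) = gaussianPDFReal 0 1 := funext hpdf
      rw [this]
      unfold gaussianPDFReal
      fun_prop
    · filter_upwards with x
      rw [hpdf]
      have hb0 : (0:ℝ) < C * (1 + x ^ 2) := by positivity
      have hpdfnn : 0 ≤ gaussianPDFReal 0 1 x := gaussianPDFReal_nonneg 0 1 x
      rw [Real.norm_eq_abs, abs_of_nonneg (mul_nonneg (Real.rpow_nonneg hb0.le d) hpdfnn)]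
      have hgp : gaussianPDFReal 0 1 x
          = (Real.sqrt (2 * Real.pi))⁻¹ * Real.exp (-x ^ 2 / 2) := by
        unfold gaussianPDFReal
        norm_num
      have step1 : (C * (1 + x ^ 2)) ^ d = C ^ d * (1 + x ^ 2) ^ d :=
        Real.mul_rpow hC.le (by positivity)
      have step2 : (1 + x ^ 2) ^ d ≤ Real.exp (2 * |x| * d) := by
        have hexp : (1 + x ^ 2) ≤ Real.exp (2 * |x|) := by
          have h1 : Real.exp (2 * |x|) = Real.exp |x| * Real.exp |x| := by
            rw [two_mul, Real.exp_add]
          rw [h1]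
          nlinarith [Real.add_one_le_exp |x|, abs_nonneg x, sq_abs x]
        calc (1 + x ^ 2) ^ d ≤ Real.exp (2 * |x|) ^ d :=
              Real.rpow_le_rpow (by positivity) hexp hd0
          _ = Real.exp (2 * |x| * d) := (Real.exp_mul _ _).symm
      have step3 : Real.exp (2 * |x| * d) * Real.exp (-x ^ 2 / 2)
          ≤ Real.exp (4 * d ^ 2) * Real.exp (-(1/4) * x ^ 2) := by
        rw [← Real.exp_add, ← Real.exp_add]
        apply Real.exp_le_exp.2
        nlinarith [sq_nonneg (2 * d - |x| / 2), sq_abs x]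
      have hsq : (0:ℝ) < (Real.sqrt (2 * Real.pi))⁻¹ := by
        rw [inv_pos]
        apply Real.sqrt_pos.2
        positivity
      calc (C * (1 + x ^ 2)) ^ d * gaussianPDFReal 0 1 x
          = C ^ d * (1 + x ^ 2) ^ d * ((Real.sqrt (2 * Real.pi))⁻¹ * Real.exp (-x ^ 2 / 2)) := by
            rw [step1, hgp]
        _ ≤ C ^ d * Real.exp (2 * |x| * d) * ((Real.sqrt (2 * Real.pi))⁻¹
              * Real.exp (-x ^ 2 / 2)) := by
            have h2 : 0 ≤ C ^ d := Real.rpow_nonneg hC.le d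
            have h3 : 0 ≤ (Real.sqrt (2 * Real.pi))⁻¹ * Real.exp (-x ^ 2 / 2) := by
              positivity
            nlinarith [mul_le_mul_of_nonneg_left step2 h2,
              mul_le_mul_of_nonneg_right (mul_le_mul_of_nonneg_left step2 h2) h3]
        _ ≤ C ^ d * Real.exp (4 * d ^ 2) * ((Real.sqrt (2 * Real.pi))⁻¹
              * Real.exp (-(1/4) * x ^ 2)) := by
            have h2 : 0 ≤ C ^ d := Real.rpow_nonneg hC.le d
            nlinarith [mul_le_mul_of_nonneg_left
              (mul_le_mul_of_nonneg_left step3 hsq.le) h2]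
        _ = C ^ d * Real.exp (4 * d ^ 2) * (Real.sqrt (2 * Real.pi))⁻¹
              * Real.exp (-(1/4) * x ^ 2) := by ring
  exact hInt.lintegral_lt_top

end

/-- Lemma A.10, higher-order part: in the DAR(1) setup with standard Gaussian innovation
`e` independent of `Y` and `X = φ₀ Y + e √(ω₀ + α₀ Y²)`, for every `d ≥ 1` and all
parameter coordinates (directions among `(1,0,0)`, `(0,1,0)`, `(0,0,1)` for `φ, ω, α`),
`E[sup_{θ∈Θ} |∂²l/∂θᵢ∂θⱼ(θ)|^d] < ∞` and `E[sup_{θ∈Θ} |∂³l/∂θᵢ∂θⱼ∂θ_k(θ)|^d] < ∞`. -/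
theorem stmt14 {Ω : Type*} [MeasurableSpace Ω] (P : Measure Ω) [IsProbabilityMeasure P]
    (c₁ c₂ c₃ c₄ c₅ : ℝ)
    (hc₁ : 0 < c₁) (hc₂ : 0 < c₂) (hc₃ : 0 < c₃) (hc₄ : 0 < c₄) (hc₅ : 0 < c₅)
    (φ₀ ω₀ α₀ : ℝ) (hθ₀ : (φ₀, ω₀, α₀) ∈ darTheta c₁ c₂ c₃ c₄ c₅)
    (Y e : Ω → ℝ) (hY : Measurable Y) (he : Measurable e)
    (heG : P.map e = gaussianReal 0 1) (hind : IndepFun Y e P) :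
    ∀ d : ℝ, 1 ≤ d →
      ∀ di ∈ ({(1, 0, 0), (0, 1, 0), (0, 0, 1)} : Set (ℝ × ℝ × ℝ)),
      ∀ dj ∈ ({(1, 0, 0), (0, 1, 0), (0, 0, 1)} : Set (ℝ × ℝ × ℝ)),
      ∀ dk ∈ ({(1, 0, 0), (0, 1, 0), (0, 0, 1)} : Set (ℝ × ℝ × ℝ)),
        (∫⁻ ω', ⨆ θ ∈ darTheta c₁ c₂ c₃ c₄ c₅,
          ENNReal.ofReal
            (|fderiv ℝ (fun θ' => fderiv ℝ
                  (darL (Y ω') (φ₀ * Y ω' + e ω' * Real.sqrt (ω₀ + α₀ * Y ω' ^ 2))) θ' dj)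
                θ di| ^ d) ∂P < ⊤) ∧
        (∫⁻ ω', ⨆ θ ∈ darTheta c₁ c₂ c₃ c₄ c₅,
          ENNReal.ofReal
            (|fderiv ℝ (fun θ' => fderiv ℝ (fun θ'' => fderiv ℝ
                  (darL (Y ω') (φ₀ * Y ω' + e ω' * Real.sqrt (ω₀ + α₀ * Y ω' ^ 2))) θ'' dk)
                  θ' dj) θ di| ^ d) ∂P < ⊤) := by
  obtain ⟨hφ₀, hω₀, hω₀', hα₀, hα₀'⟩ := hθ₀
  intro d hd di hdi dj hdj dk hdk
  have hd0 : (0:ℝ) ≤ d := le_trans zero_le_one hd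
  have hsvne : ∀ (Yr : ℝ) (θ : ℝ × ℝ × ℝ), θ ∈ darTheta c₁ c₂ c₃ c₄ c₅ →
      svF Yr θ ≠ 0 := by
    intro Yr θ hθ
    obtain ⟨h1, h2, h3, h4, h5⟩ := hθ
    have : 0 < svF Yr θ := by unfold svF; nlinarith [sq_nonneg Yr]
    exact this.ne'
  constructor
  · set C := CC2 c₁ c₂ c₃ c₄ c₅ with hC
    have hCpos : 0 < C := CC2_pos hc₁ hc₂ hc₃ hc₄ hc₅
    have hmeas : Measurable fun x : ℝ => ENNReal.ofReal ((C * (1 + x ^ 2)) ^ d) := by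
      apply ENNReal.measurable_ofReal.comp
      apply Continuous.measurable
      exact Continuous.rpow_const (by fun_prop) (fun x => Or.inr hd0)
    have hkey : ∀ ω' : Ω,
        (⨆ θ ∈ darTheta c₁ c₂ c₃ c₄ c₅, ENNReal.ofReal
          (|fderiv ℝ (fun θ' => fderiv ℝ
              (darL (Y ω') (φ₀ * Y ω' + e ω' * Real.sqrt (ω₀ + α₀ * Y ω' ^ 2))) θ' dj)
            θ di| ^ d))
          ≤ ENNReal.ofReal ((C * (1 + (e ω') ^ 2)) ^ d) := by
      intro ω'
      apply iSup₂_le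
      intro θ hθ
      rw [fderiv2 (Y ω') (φ₀ * Y ω' + e ω' * Real.sqrt (ω₀ + α₀ * Y ω' ^ 2)) θ
        (hsvne (Y ω') θ hθ) dj di]
      apply ENNReal.ofReal_le_ofReal
      apply Real.rpow_le_rpow (abs_nonneg _) _ hd0
      exact boundG2 hc₁ hc₂ hc₃ hc₄ hc₅ hφ₀ hω₀ hω₀' hα₀ hα₀' (Y ω') (e ω') hdj hdi hθ
    apply lt_of_le_of_lt (lintegral_mono hkey)
    have hmap : ∫⁻ ω', ENNReal.ofReal ((C * (1 + (e ω') ^ 2)) ^ d) ∂P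
        = ∫⁻ x, ENNReal.ofReal ((C * (1 + x ^ 2)) ^ d) ∂(P.map e) :=
      (lintegral_map hmeas he).symm
    rw [hmap, heG]
    exact gaussInt C d hCpos hd0
  · set C := CC3 c₁ c₂ c₃ c₄ c₅ with hC
    have hCpos : 0 < C := CC3_pos hc₁ hc₂ hc₃ hc₄ hc₅
    have hmeas : Measurable fun x : ℝ => ENNReal.ofReal ((C * (1 + x ^ 2)) ^ d) := by
      apply ENNReal.measurable_ofReal.comp
      apply Continuous.measurable
      exact Continuous.rpow_const (by fun_prop) (fun x => Or.inr hd0)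
    have hkey : ∀ ω' : Ω,
        (⨆ θ ∈ darTheta c₁ c₂ c₃ c₄ c₅, ENNReal.ofReal
          (|fderiv ℝ (fun θ' => fderiv ℝ (fun θ'' => fderiv ℝ
              (darL (Y ω') (φ₀ * Y ω' + e ω' * Real.sqrt (ω₀ + α₀ * Y ω' ^ 2))) θ'' dk)
              θ' dj) θ di| ^ d))
          ≤ ENNReal.ofReal ((C * (1 + (e ω') ^ 2)) ^ d) := by
      intro ω'
      apply iSup₂_le
      intro θ hθ
      rw [fderiv3 (Y ω') (φ₀ * Y ω' + e ω' * Real.sqrt (ω₀ + α₀ * Y ω' ^ 2)) θ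
        (hsvne (Y ω') θ hθ) dk dj di]
      apply ENNReal.ofReal_le_ofReal
      apply Real.rpow_le_rpow (abs_nonneg _) _ hd0
      exact boundG3 hc₁ hc₂ hc₃ hc₄ hc₅ hφ₀ hω₀ hω₀' hα₀ hα₀' (Y ω') (e ω') hdk hdj hdi hθ
    apply lt_of_le_of_lt (lintegral_mono hkey)
    have hmap : ∫⁻ ω', ENNReal.ofReal ((C * (1 + (e ω') ^ 2)) ^ d) ∂P
        = ∫⁻ x, ENNReal.ofReal ((C * (1 + x ^ 2)) ^ d) ∂(P.map e) :=
      (lintegral_map hmeas he).symm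
    rw [hmap, heG]
    exact gaussInt C d hCpos hd0
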